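/- Let a, b be elements of a finite abelian group G = (ℤ/ℓℤ)^r × ℤ/kℤ with ℓ | k, written a = (v₁, c₁), b = (v₂, c₂). Then there exist v₁', c₁', v₂' such that ⟨a, b⟩ = ⟨(v₁', c₁'), (v₂', 0)⟩, i.e. the subgroup generated by a and b is generated by two elements, one of which lies in the subgroup (ℤ/ℓℤ)^r × {0} and hence has order dividing ℓ. -/

import Mathlib

/-- `ℚ/ℤ` as `AddCircle (1 : ℚ)`. -/
abbrev QZ := AddCircle (1 : ℚ)

/-- The `ℓ`-torsion subgroup `A[ℓ] = {a : ℓ • a = 0}`. -/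
def torsAt (ℓ : ℕ) (A : Type*) [AddCommGroup A] : AddSubgroup A where
  carrier := {a | ℓ • a = 0}
  zero_mem' := by simp
  add_mem' := by
    intro a b ha hb
    simp only [Set.mem_setOf_eq, smul_add] at *
    rw [ha, hb, add_zero]
  neg_mem' := by
    intro a ha
    simp only [Set.mem_setOf_eq, smul_neg] at *
    rw [ha, neg_zero]

/-- In `(ℤ/ℓℤ)^r × ℤ/kℤ` with `ℓ ∣ k`, any 2-generated subgroup `⟨a, b⟩` is generated by
two elements one of which lies in `(ℤ/ℓℤ)^r × {0}`. -/
lemma closure_pair_change {G : Type*} [AddCommGroup G] (a b : G) (p q m n : ℤ)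
    (h : p * n - q * m = 1) :
    AddSubgroup.closure {a, b} =
      AddSubgroup.closure {p • a + q • b, m • a + n • b} := by
  have memA : (p • a + q • b) ∈ AddSubgroup.closure {p • a + q • b, m • a + n • b} :=
    AddSubgroup.subset_closure (by simp)
  have memB : (m • a + n • b) ∈ AddSubgroup.closure {p • a + q • b, m • a + n • b} :=
    AddSubgroup.subset_closure (by simp)
  have memA' : a ∈ AddSubgroup.closure {a, b} := AddSubgroup.subset_closure (by simp)
  have memB' : b ∈ AddSubgroup.closure {a, b} := AddSubgroup.subset_closure (by simp)
  have key1 : a = n • (p • a + q • b) - q • (m • a + n • b) := by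
    match_scalars
    · linear_combination -h
    · ring
  have key2 : b = p • (m • a + n • b) - m • (p • a + q • b) := by
    match_scalars
    · linear_combination -h
    · ring
  apply le_antisymm <;> rw [AddSubgroup.closure_le] <;> intro x hx <;>
    rcases hx with rfl | rfl
  · have := AddSubgroup.sub_mem _ (AddSubgroup.zsmul_mem _ memA n) (AddSubgroup.zsmul_mem _ memB q)
    rwa [← key1] at this
  · have := AddSubgroup.sub_mem _ (AddSubgroup.zsmul_mem _ memB p) (AddSubgroup.zsmul_mem _ memA m)
    rwa [← key2] at this
  · exact AddSubgroup.add_mem _ (AddSubgroup.zsmul_mem _ memA' p) (AddSubgroup.zsmul_mem _ memB' q)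
  · exact AddSubgroup.add_mem _ (AddSubgroup.zsmul_mem _ memA' m) (AddSubgroup.zsmul_mem _ memB' n)

theorem stmt8 (ℓ r k : ℕ) (hℓ : ℓ.Prime) (hk : 0 < k) (hdvd : ℓ ∣ k)
    (a b : (Fin r → ZMod ℓ) × ZMod k) :
    ∃ (v₁' : Fin r → ZMod ℓ) (c₁' : ZMod k) (v₂' : Fin r → ZMod ℓ),
      AddSubgroup.closure {a, b} =
        AddSubgroup.closure {(v₁', c₁'), (v₂', (0 : ZMod k))} := by
  haveI : NeZero k := ⟨hk.ne'⟩
  set x : ℤ := (a.2.val : ℤ) with hxdef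
  set y : ℤ := (b.2.val : ℤ) with hydef
  have ha2 : ((x : ℤ) : ZMod k) = a.2 := by
    simp [hxdef, ZMod.natCast_val, ZMod.cast_id]
  have hb2 : ((y : ℤ) : ZMod k) = b.2 := by
    simp [hydef, ZMod.natCast_val, ZMod.cast_id]
  by_cases hg : Int.gcd x y = 0
  · -- both components are zero; b already has second component 0
    have hy0 : y = 0 := Int.gcd_eq_zero_iff.mp hg |>.2
    have hb0 : b.2 = 0 := by rw [← hb2, hy0]; simp
    refine ⟨a.1, a.2, b.1, ?_⟩
    have h1 : (a.1, a.2) = a := Prod.mk.eta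
    have h2 : (b.1, (0 : ZMod k)) = b := by rw [← hb0]
    rw [h1, h2]
  · set g : ℤ := (Int.gcd x y : ℤ) with hgdef
    have hgne : g ≠ 0 := by
      simp only [hgdef, ne_eq, Int.natCast_eq_zero]
      exact hg
    obtain ⟨u, hu⟩ : g ∣ x := Int.gcd_dvd_left x y
    obtain ⟨w, hw⟩ : g ∣ y := Int.gcd_dvd_right x y
    have hcop : IsCoprime u w := by
      rw [Int.isCoprime_iff_gcd_eq_one]
      have := Int.gcd_div_gcd_div_gcd (i := x) (j := y) (Nat.pos_of_ne_zero hg)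
      rwa [← hgdef, hu, hw, Int.mul_ediv_cancel_left _ hgne,
        Int.mul_ediv_cancel_left _ hgne] at this
    obtain ⟨p, q, hpq⟩ := hcop
    refine ⟨(p • a + q • b).1, (p • a + q • b).2, ((-w) • a + u • b).1, ?_⟩
    have h0 : ((-w) • a + u • b).2 = 0 := by
      have hz : (-w) * x + u * y = 0 := by rw [hu, hw]; ring
      show (-w) • a.2 + u • b.2 = 0
      rw [← ha2, ← hb2]
      calc (-w) • ((x : ℤ) : ZMod k) + u • ((y : ℤ) : ZMod k)
          = (((-w) * x + u * y : ℤ) : ZMod k) := by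
            simp only [zsmul_eq_mul]; push_cast; ring
        _ = 0 := by rw [hz]; simp
    have hdet : p * u - q * (-w) = 1 := by linear_combination hpq
    rw [closure_pair_change a b p q (-w) u hdet]
    have e1 : ((p • a + q • b).1, (p • a + q • b).2) = p • a + q • b := Prod.mk.eta
    have e2 : (((-w) • a + u • b).1, (0 : ZMod k)) = (-w) • a + u • b := by rw [← h0]
    rw [e1, e2]
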